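/- The coefficient sequence c(n) of η(7τ)^7/η(τ) satisfies: c(1) = 0, and there exist five pairwise coprime positive integers l, m, n, u, v with c(l)·c(m)·c(n)·c(u)·c(v) ≠ 0 (for instance l = 3, m = 4, n = 5, u = 7, v = 11 with c(3) = 1, c(4) = 2, c(5) = 3, c(7) = 7, c(11) = 16). Hence the uniqueness lemma for difference decompositions into Euler products applies to L_{Φ_7}(s). -/

import Mathlib

open PowerSeries

/-- The product topology (X-adic topology) on `ℤ⟦X⟧`. -/
noncomputable instance : TopologicalSpace (PowerSeries ℤ) :=
  inferInstanceAs (TopologicalSpace ((Unit →₀ ℕ) → ℤ))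

/-- `F = X² · ∏_{n=1}^∞ (1 − X^{7n})^7 · (∏_{n=1}^∞ (1 − X^n))⁻¹`, the q-expansion of
the eta-product `η(7τ)^7/η(τ)`. -/
noncomputable def F : PowerSeries ℤ :=
  (X : PowerSeries ℤ) ^ 2 * (∏' n : ℕ+, (1 - (X : PowerSeries ℤ) ^ (7 * (n : ℕ))) ^ 7) *
    Ring.inverse (∏' n : ℕ+, (1 - (X : PowerSeries ℤ) ^ (n : ℕ)))

/-- `c(n)`, the coefficient of `X^n` in `F`. -/
noncomputable def c (n : ℕ) : ℤ := PowerSeries.coeff (R := ℤ) n F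

section Aux
open Filter Finset

noncomputable instance : T2Space (PowerSeries ℤ) :=
  inferInstanceAs (T2Space ((Unit →₀ ℕ) → ℤ))

/-- `B` agrees with `1` in all coefficients up to degree `d`. -/
def LowTriv (d : ℕ) (B : PowerSeries ℤ) : Prop := ∀ j ≤ d, coeff (R := ℤ) j (B - 1) = 0

lemma lowTriv_one (d : ℕ) : LowTriv d 1 := fun j _ => by simp

lemma coeff_mul_lowTriv {d : ℕ} {B : PowerSeries ℤ} (hB : LowTriv d B) (A : PowerSeries ℤ) :
    coeff (R := ℤ) d (A * B) = coeff (R := ℤ) d A := by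
  have h : A * B = A + A * (B - 1) := by ring
  rw [h, map_add, add_eq_left.mpr ?_]
  rw [PowerSeries.coeff_mul]
  apply Finset.sum_eq_zero
  intro p hp
  rw [Finset.HasAntidiagonal.mem_antidiagonal] at hp
  rw [hB p.2 (by omega), mul_zero]

lemma lowTriv_mul {d : ℕ} {B C : PowerSeries ℤ} (hB : LowTriv d B) (hC : LowTriv d C) :
    LowTriv d (B * C) := by
  intro j hj
  have h : B * C - 1 = (B - 1) * C + (C - 1) := by ring
  rw [h, map_add, hC j hj, add_zero, PowerSeries.coeff_mul]
  apply Finset.sum_eq_zero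
  intro p hp
  rw [Finset.HasAntidiagonal.mem_antidiagonal] at hp
  rw [hB p.1 (by omega), zero_mul]

lemma lowTriv_prod {d : ℕ} {ι : Type*} (s : Finset ι) (f : ι → PowerSeries ℤ)
    (h : ∀ i ∈ s, LowTriv d (f i)) : LowTriv d (∏ i ∈ s, f i) :=
  Finset.prod_induction f (LowTriv d) (fun _ _ => lowTriv_mul) (lowTriv_one d) h

lemma lowTriv_one_sub_X_pow {d m : ℕ} (h : d < m) : LowTriv d (1 - (X : PowerSeries ℤ) ^ m) := by
  intro j hj
  simp only [sub_sub_cancel_left, map_neg, PowerSeries.coeff_X_pow, neg_eq_zero,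
    if_neg (by omega : ¬ j = m)]

lemma lowTriv_pow {d : ℕ} {B : PowerSeries ℤ} (hB : LowTriv d B) (e : ℕ) : LowTriv d (B ^ e) := by
  induction e with
  | zero => simpa using lowTriv_one d
  | succ n ih => rw [pow_succ]; exact lowTriv_mul ih hB

lemma coeff_prod_filter {d : ℕ} {ι : Type*} (s : Finset ι) (f : ι → PowerSeries ℤ)
    (p : ι → Prop) [DecidablePred p] (h : ∀ i ∈ s, ¬ p i → LowTriv d (f i)) :
    coeff (R := ℤ) d (∏ i ∈ s, f i) = coeff (R := ℤ) d (∏ i ∈ s.filter p, f i) := by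
  rw [← Finset.prod_filter_mul_prod_filter_not s p f]
  exact coeff_mul_lowTriv (lowTriv_prod _ _ (fun i hi => by
    rw [Finset.mem_filter] at hi; exact h i hi.1 hi.2)) _

lemma hasProd_aux (f : ℕ+ → PowerSeries ℤ)
    (hf : ∀ (n : ℕ+) (d : ℕ), d < (n : ℕ) → LowTriv d (f n)) :
    HasProd f (PowerSeries.mk fun d =>
      coeff (R := ℤ) d (∏ k ∈ Finset.range d, f ⟨k + 1, k.succ_pos⟩)) := by
  rw [HasProd]
  apply tendsto_pi_nhds.mpr
  intro x
  rw [nhds_discrete, tendsto_pure]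
  set d := x () with hd
  have hx : x = Finsupp.single () d := Finsupp.unique_single x
  have key : ∀ P : PowerSeries ℤ, P x = coeff (R := ℤ) d P := by
    intro P
    rw [hx]
    rfl
  refine eventually_atTop.mpr
    ⟨(Finset.range d).image (fun k => (⟨k + 1, k.succ_pos⟩ : ℕ+)), fun s hs => ?_⟩
  rw [key (∏ b ∈ s, f b), key (PowerSeries.mk fun d =>
    coeff (R := ℤ) d (∏ k ∈ Finset.range d, f ⟨k + 1, k.succ_pos⟩)), PowerSeries.coeff_mk]
  rw [coeff_prod_filter s f (fun n => (n : ℕ) ≤ d)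
    (fun i _ hi => hf i d (by omega))]
  have hinj : Function.Injective (fun k : ℕ => (⟨k + 1, k.succ_pos⟩ : ℕ+)) := by
    intro a b hab
    simpa [PNat.mk_ofNat, Subtype.ext_iff] using hab
  have hset : s.filter (fun n : ℕ+ => (n : ℕ) ≤ d)
      = (Finset.range d).image (fun k => (⟨k + 1, k.succ_pos⟩ : ℕ+)) := by
    ext n
    simp only [Finset.mem_filter, Finset.mem_image, Finset.mem_range]
    erw [Finset.mem_image]; simp only [Finset.mem_range]
    constructor
    · rintro ⟨-, hnd⟩
      refine ⟨(n : ℕ) - 1, by have := n.pos; omega, ?_⟩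
      apply Subtype.ext
      have := n.pos
      show (n : ℕ) - 1 + 1 = (n : ℕ)
      omega
    · rintro ⟨k, hk, rfl⟩
      exact ⟨hs (Finset.mem_image.mpr ⟨k, Finset.mem_range.mpr hk, rfl⟩), by simpa using hk⟩
  rw [hset]
  exact congrArg (coeff (R := ℤ) d) (Finset.prod_image (fun a _ b _ h => hinj h))

lemma coeff_tprod (f : ℕ+ → PowerSeries ℤ)
    (hf : ∀ (n : ℕ+) (d : ℕ), d < (n : ℕ) → LowTriv d (f n)) (d : ℕ) :
    coeff (R := ℤ) d (∏' n, f n) = coeff (R := ℤ) d (∏ k ∈ Finset.range d, f ⟨k + 1, k.succ_pos⟩) := by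
  rw [(hasProd_aux f hf).tprod_eq, PowerSeries.coeff_mk]

/-- The denominator product `∏ (1 - Xⁿ)`. -/
noncomputable def D : PowerSeries ℤ := ∏' n : ℕ+, (1 - (X : PowerSeries ℤ) ^ (n : ℕ))

/-- The numerator product `∏ (1 - X^{7n})⁷`. -/
noncomputable def N : PowerSeries ℤ := ∏' n : ℕ+, (1 - (X : PowerSeries ℤ) ^ (7 * (n : ℕ))) ^ 7

lemma coeffD_eq (d : ℕ) :
    coeff (R := ℤ) d D = coeff (R := ℤ) d (∏ k ∈ Finset.range d, (1 - (X : PowerSeries ℤ) ^ (k + 1))) :=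
  coeff_tprod _ (fun n d h => lowTriv_one_sub_X_pow h) d

lemma coeffN_eq (d : ℕ) :
    coeff (R := ℤ) d N = coeff (R := ℤ) d (∏ k ∈ Finset.range d,
      (1 - (X : PowerSeries ℤ) ^ (7 * (k + 1))) ^ 7) :=
  coeff_tprod _ (fun n d h => lowTriv_pow (lowTriv_one_sub_X_pow
    (by have := n.pos; omega)) 7) d

lemma coeff_mul_one_sub (A : PowerSeries ℤ) (d m : ℕ) :
    coeff (R := ℤ) d (A * (1 - X ^ m)) =
      coeff (R := ℤ) d A - if m ≤ d then coeff (R := ℤ) (d - m) A else 0 := by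
  rw [mul_sub, mul_one, map_sub, PowerSeries.coeff_mul_X_pow']

lemma mul_pow7 (A : PowerSeries ℤ) (m : ℕ) : A * (1 - (X : PowerSeries ℤ) ^ m) ^ 7 =
    ((((((A * (1 - X ^ m)) * (1 - X ^ m)) * (1 - X ^ m)) * (1 - X ^ m)) * (1 - X ^ m)) *
      (1 - X ^ m)) * (1 - X ^ m) := by ring

lemma coeff_pow7 (j m : ℕ) : coeff (R := ℤ) j ((1 - (X : PowerSeries ℤ) ^ m) ^ 7) =
    coeff (R := ℤ) j (((((((1 - (X : PowerSeries ℤ) ^ m) * (1 - X ^ m)) * (1 - X ^ m)) * (1 - X ^ m)) *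
      (1 - X ^ m)) * (1 - X ^ m)) * (1 - X ^ m)) :=
  congrArg _ (by ring)

lemma coeffD_val (d : ℕ) (hd : d ≤ 11) :
    coeff (R := ℤ) d D = if d = 0 then 1 else if d = 1 then -1 else if d = 2 then -1
      else if d = 5 then 1 else if d = 7 then 1 else 0 := by
  rw [coeffD_eq]
  interval_cases d <;>
    simp [Finset.prod_range_succ, coeff_mul_one_sub, PowerSeries.coeff_one, PowerSeries.coeff_X]

lemma coeffN_val (d : ℕ) (hd : d ≤ 9) :
    coeff (R := ℤ) d N = if d = 0 then 1 else if d = 7 then -7 else 0 := by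
  rw [coeffN_eq]
  interval_cases d <;>
    simp [Finset.prod_range_succ, mul_pow7, coeff_pow7, coeff_mul_one_sub,
      PowerSeries.coeff_one, PowerSeries.coeff_X_pow, map_sub]

end Aux

lemma D_unit : IsUnit D := by
  rw [PowerSeries.isUnit_iff_constantCoeff]
  have h0 : coeff (R := ℤ) 0 D = 1 := by norm_num [coeffD_val]
  rw [PowerSeries.coeff_zero_eq_constantCoeff_apply] at h0
  rw [h0]
  exact isUnit_one

lemma hFD : F * D = X ^ 2 * N := by
  have h : F = X ^ 2 * N * Ring.inverse D := rfl
  rw [h, mul_assoc, Ring.inverse_mul_cancel D D_unit, mul_one]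

lemma conv_eq (n : ℕ) :
    ∑ k ∈ Finset.range (n + 1), coeff (R := ℤ) k F * coeff (R := ℤ) (n - k) D = coeff (R := ℤ) n (X ^ 2 * N) := by
  have h := congrArg (coeff (R := ℤ) n) hFD
  rwa [PowerSeries.coeff_mul, Finset.Nat.sum_antidiagonal_eq_sum_range_succ_mk] at h

lemma rhs_val (n : ℕ) (hn : n ≤ 11) :
    coeff (R := ℤ) n ((X : PowerSeries ℤ) ^ 2 * N) = if n = 2 then 1 else if n = 9 then -7 else 0 := by
  rw [mul_comm, PowerSeries.coeff_mul_X_pow']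
  interval_cases n <;> norm_num [coeffN_val]

theorem coeff_F_values :
    coeff (R := ℤ) 0 F = 0 ∧ coeff (R := ℤ) 1 F = 0 ∧ coeff (R := ℤ) 3 F = 1 ∧ coeff (R := ℤ) 4 F = 2 ∧
    coeff (R := ℤ) 5 F = 3 ∧ coeff (R := ℤ) 7 F = 7 ∧ coeff (R := ℤ) 11 F = 16 := by
  have d0 : coeff (R := ℤ) 0 D = 1 := by norm_num [coeffD_val]
  have d1 : coeff (R := ℤ) 1 D = -1 := by norm_num [coeffD_val]
  have d2 : coeff (R := ℤ) 2 D = -1 := by norm_num [coeffD_val]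
  have d3 : coeff (R := ℤ) 3 D = 0 := by norm_num [coeffD_val]
  have d4 : coeff (R := ℤ) 4 D = 0 := by norm_num [coeffD_val]
  have d5 : coeff (R := ℤ) 5 D = 1 := by norm_num [coeffD_val]
  have d6 : coeff (R := ℤ) 6 D = 0 := by norm_num [coeffD_val]
  have d7 : coeff (R := ℤ) 7 D = 1 := by norm_num [coeffD_val]
  have d8 : coeff (R := ℤ) 8 D = 0 := by norm_num [coeffD_val]
  have d9 : coeff (R := ℤ) 9 D = 0 := by norm_num [coeffD_val]
  have d10 : coeff (R := ℤ) 10 D = 0 := by norm_num [coeffD_val]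
  have d11 : coeff (R := ℤ) 11 D = 0 := by norm_num [coeffD_val]
  have E : ∀ n, n ≤ 11 → ∑ k ∈ Finset.range (n + 1), coeff (R := ℤ) k F * coeff (R := ℤ) (n - k) D
      = if n = 2 then 1 else if n = 9 then -7 else 0 := fun n hn =>
    (conv_eq n).trans (rhs_val n hn)
  have E0 := E 0 (by norm_num); have E1 := E 1 (by norm_num); have E2 := E 2 (by norm_num)
  have E3 := E 3 (by norm_num); have E4 := E 4 (by norm_num); have E5 := E 5 (by norm_num)
  have E6 := E 6 (by norm_num); have E7 := E 7 (by norm_num); have E8 := E 8 (by norm_num)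
  have E9 := E 9 (by norm_num); have E10 := E 10 (by norm_num); have E11 := E 11 (by norm_num)
  norm_num [Finset.sum_range_succ, d0, d1, d2, d3, d4, d5, d6, d7, d8, d9, d10, d11]
    at E0 E1 E2 E3 E4 E5 E6 E7 E8 E9 E10 E11
  have f0 : coeff (R := ℤ) 0 F = 0 := by rw [PowerSeries.coeff_zero_eq_constantCoeff_apply]; linarith
  have f1 : coeff (R := ℤ) 1 F = 0 := by linarith
  have f2 : coeff (R := ℤ) 2 F = 1 := by linarith
  have f3 : coeff (R := ℤ) 3 F = 1 := by linarith
  have f4 : coeff (R := ℤ) 4 F = 2 := by linarith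
  have f5 : coeff (R := ℤ) 5 F = 3 := by linarith
  have f6 : coeff (R := ℤ) 6 F = 5 := by linarith
  have f7 : coeff (R := ℤ) 7 F = 7 := by linarith
  have f8 : coeff (R := ℤ) 8 F = 11 := by linarith
  have f9 : coeff (R := ℤ) 9 F = 8 := by linarith
  have f10 : coeff (R := ℤ) 10 F = 15 := by linarith
  have f11 : coeff (R := ℤ) 11 F = 16 := by linarith
  exact ⟨f0, f1, f3, f4, f5, f7, f11⟩

/-- The coefficient sequence of `η(7τ)^7/η(τ)` satisfies `c(1) = 0` and there exist
five pairwise coprime positive integers on which `c` does not vanish (for instance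
`3, 4, 5, 7, 11` with `c(3) = 1`, `c(4) = 2`, `c(5) = 3`, `c(7) = 7`, `c(11) = 16`);
hence the uniqueness lemma for difference decompositions applies to `L_{Φ_7}(s)`. -/
theorem c_satisfies_uniqueness_hypotheses :
    c 1 = 0 ∧
    (c 3 = 1 ∧ c 4 = 2 ∧ c 5 = 3 ∧ c 7 = 7 ∧ c 11 = 16) ∧
    ∃ l m n u v : ℕ, 0 < l ∧ 0 < m ∧ 0 < n ∧ 0 < u ∧ 0 < v ∧
      List.Pairwise Nat.Coprime [l, m, n, u, v] ∧
      c l * c m * c n * c u * c v ≠ 0 := by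
  obtain ⟨-, h1, h3, h4, h5, h7, h11⟩ := coeff_F_values
  have c1 : c 1 = 0 := h1
  have c3 : c 3 = 1 := h3
  have c4 : c 4 = 2 := h4
  have c5 : c 5 = 3 := h5
  have c7 : c 7 = 7 := h7
  have c11 : c 11 = 16 := h11
  refine ⟨c1, ⟨c3, c4, c5, c7, c11⟩, 3, 4, 5, 7, 11, by norm_num, by norm_num, by norm_num,
    by norm_num, by norm_num, ?_, ?_⟩
  · decide
  · rw [c3, c4, c5, c7, c11]; norm_num
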